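/- Let G be a finite connected k-regular simple graph with n vertices and m edges, where k ≥ 2. If λ_A ∈ ℝ is an eigenvalue of the adjacency matrix A(G) and λ ∈ ℂ satisfies λ² − λ_A·λ + k − 1 = 0, then λ is an eigenvalue of U⁺ over ℂ. (Backward direction of Theorem 5.1.) -/

import Mathlib

open Matrix SimpleGraph Polynomial

/-- The transition matrix `U` (over `ℝ`) of the discrete-time quantum walk on `G`, indexed
by darts: `U e f = 2 / deg (t f)` if `t f = o e` and `f ≠ e⁻¹`, `U e f = 2 / deg (t f) - 1`
if `f = e⁻¹`, and `0` otherwise. -/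
noncomputable def quantumUR {V : Type*} [Fintype V] (G : SimpleGraph V)
    [DecidableRel G.Adj] [DecidableEq V] : Matrix G.Dart G.Dart ℝ :=
  fun e f =>
    if f.toProd.2 = e.toProd.1 ∧ f ≠ e.symm then (2 : ℝ) / (G.degree f.toProd.2 : ℝ)
    else if f = e.symm then (2 : ℝ) / (G.degree f.toProd.2 : ℝ) - 1
    else 0

/-- The positive support of a real matrix, viewed as a matrix over a semiring `R`:
entry `1` where the original entry is positive, `0` otherwise. -/
noncomputable def posSupport {α : Type*} (R : Type*) [Zero R] [One R]
    (F : Matrix α α ℝ) : Matrix α α R :=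
  fun i j => if 0 < F i j then 1 else 0

/-! ### Auxiliary lemmas -/

lemma aux_mem_spectrum_of_mulVec {n : Type*} [Fintype n] [DecidableEq n]
    (M : Matrix n n ℂ) (lam : ℂ) (v : n → ℂ) (hv : v ≠ 0)
    (h : M *ᵥ v = lam • v) : lam ∈ spectrum ℂ M := by
  rw [spectrum.mem_iff]
  intro hunit
  rw [Matrix.isUnit_iff_isUnit_det, isUnit_iff_ne_zero] at hunit
  apply hunit
  rw [← Matrix.exists_mulVec_eq_zero_iff]
  refine ⟨v, hv, ?_⟩
  rw [Algebra.algebraMap_eq_smul_one, Matrix.sub_mulVec, Matrix.smul_mulVec,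
    Matrix.one_mulVec, h, sub_self]

lemma aux_exists_eigvec_of_mem_spectrum {n : Type*} [Fintype n] [DecidableEq n]
    (M : Matrix n n ℝ) (a : ℝ) (ha : a ∈ spectrum ℝ M) :
    ∃ v : n → ℝ, v ≠ 0 ∧ M *ᵥ v = a • v := by
  rw [spectrum.mem_iff, Matrix.isUnit_iff_isUnit_det, isUnit_iff_ne_zero, not_not,
    ← Matrix.exists_mulVec_eq_zero_iff] at ha
  obtain ⟨v, hv, hMv⟩ := ha
  refine ⟨v, hv, ?_⟩
  rw [Algebra.algebraMap_eq_smul_one, Matrix.sub_mulVec, Matrix.smul_mulVec,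
    Matrix.one_mulVec, sub_eq_zero] at hMv
  exact hMv.symm

lemma aux_sum_ite_count {α : Type*} [Fintype α] [DecidableEq α] (l : List α)
    (p : α → Prop) [DecidablePred p] :
    ∑ x : α, (if p x then (l.count x : ℂ) else 0)
      = (l.countP (fun x => decide (p x)) : ℂ) := by
  induction l with
  | nil => simp
  | cons a l ih =>
    rw [List.countP_cons]
    push_cast
    rw [← ih]
    have : ∀ x : α, (if p x then ((a :: l).count x : ℂ) else 0)
        = (if p x then (l.count x : ℂ) else 0)
          + (if x = a then (if p x then 1 else 0) else 0) := by
      intro x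
      by_cases hx : x = a
      · subst hx
        by_cases hp : p x <;> simp [hp, List.count_cons_self]
      · by_cases hp : p x <;> simp [hp, hx, List.count_cons_of_ne (Ne.symm hx)]
    simp_rw [this, Finset.sum_add_distrib, Finset.sum_ite_eq' Finset.univ a]
    simp [apply_ite]

lemma aux_walk_count {V : Type*} [DecidableEq V] {G : SimpleGraph V} {s t : V}
    (p : G.Walk s t) (u : V) :
    (p.darts.countP (fun f => decide (f.toProd.2 = u)) : ℂ)
      - (p.darts.countP (fun f => decide (f.toProd.1 = u)) : ℂ)
      = (if t = u then 1 else 0) - (if s = u then 1 else 0) := by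
  induction p with
  | nil => simp
  | @cons s w t h p ih =>
    rw [SimpleGraph.Walk.darts_cons, List.countP_cons, List.countP_cons]
    push_cast
    simp only [decide_eq_true_eq]
    by_cases hw : w = u <;> by_cases hs : s = u <;> by_cases ht : t = u <;>
      simp only [hw, hs, ht, if_true, if_false, if_neg, ite_true, ite_false] at ih ⊢ <;>
      linear_combination ih

lemma aux_exists_cycle {V : Type*} [Fintype V] [DecidableEq V] (G : SimpleGraph V)
    [DecidableRel G.Adj] (hconn : G.Connected) (k : ℕ)
    (hreg : G.IsRegularOfDegree k) (hk : 2 ≤ k) :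
    ∃ (v : V) (c : G.Walk v v), c.IsCycle := by
  by_contra h
  push_neg at h
  have hac : G.IsAcyclic := fun v c hc => h v c hc
  have htree : G.IsTree := ⟨hconn, hac⟩
  have hcard := htree.card_edgeFinset
  have hsum := G.sum_degrees_eq_twice_card_edges
  have hn : 1 ≤ Fintype.card V := Fintype.card_pos_iff.mpr hconn.nonempty
  have hdeg : ∑ v : V, G.degree v = k * Fintype.card V := by
    simp [hreg _, Finset.sum_const, mul_comm]
  rw [hdeg, ← hcard] at hsum
  have h2 : 2 * (G.edgeFinset.card + 1) ≤ k * (G.edgeFinset.card + 1) :=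
    Nat.mul_le_mul_right _ hk
  omega

lemma aux_exists_flow {V : Type*} [Fintype V] [DecidableEq V] (G : SimpleGraph V)
    [DecidableRel G.Adj] (hconn : G.Connected) (k : ℕ)
    (hreg : G.IsRegularOfDegree k) (hk : 2 ≤ k) :
    ∃ (z : G.Dart → ℂ) (e₀ : G.Dart), z e₀ ≠ 0 ∧ (∀ e, z e.symm = -z e) ∧
      (∀ u : V, ∑ f : G.Dart, (if f.toProd.2 = u then z f else 0) = 0) := by
  obtain ⟨v, c, hc⟩ := aux_exists_cycle G hconn k hreg hk
  set z : G.Dart → ℂ := fun e => (c.darts.count e : ℂ) - (c.darts.count e.symm : ℂ) with hz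
  have hne : c.darts ≠ [] := by
    have h3 := hc.three_le_length
    intro h
    rw [← SimpleGraph.Walk.length_darts, h] at h3
    simp at h3
  obtain ⟨e₀, he₀⟩ : ∃ e, e ∈ c.darts := List.exists_mem_of_ne_nil _ hne
  have hsymmnot : e₀.symm ∉ c.darts := by
    intro hmem
    have hnodup : (c.darts.map SimpleGraph.Dart.edge).Nodup := hc.edges_nodup
    have := List.inj_on_of_nodup_map hnodup he₀ hmem (SimpleGraph.Dart.edge_symm e₀).symm
    exact SimpleGraph.Dart.symm_ne e₀ this.symm
  refine ⟨z, e₀, ?_, ?_, ?_⟩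
  · have h1 : 0 < c.darts.count e₀ := List.count_pos_iff.mpr he₀
    have h2 : c.darts.count e₀.symm = 0 := List.count_eq_zero.mpr hsymmnot
    simp only [hz, h2, Nat.cast_zero, sub_zero]
    exact_mod_cast h1.ne'
  · intro e
    simp only [hz, SimpleGraph.Dart.symm_symm]
    ring
  · intro u
    have split : ∀ f : G.Dart, (if f.toProd.2 = u then z f else 0)
        = (if f.toProd.2 = u then (c.darts.count f : ℂ) else 0)
          - (if f.toProd.2 = u then (c.darts.count f.symm : ℂ) else 0) := by
      intro f
      by_cases h : f.toProd.2 = u <;> simp [h, hz]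
    simp_rw [split, Finset.sum_sub_distrib]
    rw [aux_sum_ite_count c.darts (fun f => f.toProd.2 = u)]
    have hswap : ∑ f : G.Dart, (if f.toProd.2 = u then (c.darts.count f.symm : ℂ) else 0)
        = ∑ f : G.Dart, (if f.toProd.1 = u then (c.darts.count f : ℂ) else 0) := by
      apply Fintype.sum_equiv (SimpleGraph.Dart.symm_involutive.toPerm)
      intro f
      simp [SimpleGraph.Dart.symm_symm, Function.Involutive.toPerm]
    rw [hswap, aux_sum_ite_count c.darts (fun f => f.toProd.1 = u)]
    have hw := aux_walk_count c u
    linear_combination hw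

section MatrixLemmas

variable {V : Type*} [Fintype V] [DecidableEq V] (G : SimpleGraph V) [DecidableRel G.Adj]

lemma aux_posSupport_quantumUR (k : ℕ) (hreg : G.IsRegularOfDegree k) (hk : 2 ≤ k) :
    posSupport ℂ (quantumUR G) = fun e f =>
      if f.toProd.2 = e.toProd.1 ∧ f ≠ e.symm then (1 : ℂ) else 0 := by
  funext e f
  have hkpos : (0 : ℝ) < (k : ℝ) := by positivity
  have hdeg : (G.degree f.toProd.2 : ℝ) = (k : ℝ) := by
    exact_mod_cast congrArg Nat.cast (hreg f.toProd.2)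
  have hpos : (0:ℝ) < 2 / (k : ℝ) := by positivity
  simp only [posSupport, quantumUR, hdeg]
  by_cases h1 : f.toProd.2 = e.toProd.1 ∧ f ≠ e.symm
  · rw [if_pos h1, if_pos h1, if_pos hpos]
  · rw [if_neg h1, if_neg h1]
    by_cases h2 : f = e.symm
    · rw [if_pos h2, if_neg]
      rw [not_lt, sub_nonpos, div_le_one hkpos]
      exact_mod_cast hk
    · rw [if_neg h2, if_neg (lt_irrefl 0)]

lemma aux_mulVec_posSupport (k : ℕ) (hreg : G.IsRegularOfDegree k) (hk : 2 ≤ k)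
    (y : G.Dart → ℂ) (e : G.Dart) :
    (posSupport ℂ (quantumUR G) *ᵥ y) e
      = (∑ f : G.Dart, if f.toProd.2 = e.toProd.1 then y f else 0) - y e.symm := by
  rw [aux_posSupport_quantumUR G k hreg hk]
  simp only [Matrix.mulVec, dotProduct]
  have h1 : ∀ f : G.Dart,
      (if f.toProd.2 = e.toProd.1 ∧ f ≠ e.symm then (1:ℂ) else 0) * y f
      = (if f.toProd.2 = e.toProd.1 then y f else 0) - (if f = e.symm then y f else 0) := by
    intro f
    by_cases h2 : f = e.symm
    · subst h2
      simp [SimpleGraph.Dart.symm_toProd]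
    · by_cases h3 : f.toProd.2 = e.toProd.1 <;> simp [h2, h3]
  simp_rw [h1, Finset.sum_sub_distrib, Finset.sum_ite_eq' Finset.univ e.symm y]
  simp

lemma aux_sum_darts_to (g : V → ℂ) (u : V) :
    ∑ f : G.Dart, (if f.toProd.2 = u then g f.toProd.1 else 0)
      = ∑ v ∈ G.neighborFinset u, g v := by
  rw [← Finset.sum_filter]
  refine Finset.sum_bij'
    (fun (f : G.Dart) (_ : f ∈ Finset.univ.filter fun f : G.Dart => f.toProd.2 = u) =>
      f.toProd.1)
    (fun v (hv : v ∈ G.neighborFinset u) => SimpleGraph.Dart.mk (v, u)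
      ((SimpleGraph.mem_neighborFinset G u v).mp hv).symm) ?_ ?_ ?_ ?_ ?_
  · intro f hf
    simp only [Finset.mem_filter] at hf
    show f.toProd.1 ∈ G.neighborFinset u
    rw [SimpleGraph.mem_neighborFinset, ← hf.2]
    exact f.adj.symm
  · intro v hv
    simp
  · intro f hf
    simp only [Finset.mem_filter] at hf
    exact SimpleGraph.Dart.ext _ _ (Prod.ext rfl hf.2.symm)
  · intro v hv
    rfl
  · intro f hf
    rfl

end MatrixLemmas

theorem stmt12 {V : Type*} [Fintype V] [DecidableEq V] (G : SimpleGraph V)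
    [DecidableRel G.Adj] (hconn : G.Connected) (k : ℕ)
    (hreg : G.IsRegularOfDegree k) (hk : 2 ≤ k)
    (a : ℝ) (ha : a ∈ spectrum ℝ (G.adjMatrix ℝ))
    (lam : ℂ) (hlam : lam ^ 2 - (a : ℂ) * lam + (k : ℂ) - 1 = 0) :
    lam ∈ spectrum ℂ (posSupport ℂ (quantumUR G)) := by
  obtain ⟨x, hx0, hAx⟩ := aux_exists_eigvec_of_mem_spectrum _ a ha
  -- the eigen-equation per vertex, over ℂ
  have hxv : ∀ u : V, ∑ v ∈ G.neighborFinset u, (x v : ℂ) = (a : ℂ) * x u := by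
    intro u
    have h := congrFun hAx u
    rw [SimpleGraph.adjMatrix_mulVec_apply] at h
    have h' : ∑ v ∈ G.neighborFinset u, x v = a * x u := h
    exact_mod_cast congrArg Complex.ofReal h'
  have hcard : ∀ u : V, (G.neighborFinset u).card = k := fun u => hreg u
  by_cases hy : (fun f : G.Dart => (x f.toProd.2 : ℂ) - lam * x f.toProd.1) = 0
  · -- degenerate case: x is lam-alternating, lam = ±1
    have hrel : ∀ f : G.Dart, (x f.toProd.2 : ℂ) = lam * x f.toProd.1 := by
      intro f
      have := congrFun hy f
      simpa [sub_eq_zero] using this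
    obtain ⟨u, hxu⟩ := Function.ne_iff.mp hx0
    have hxuC : (x u : ℂ) ≠ 0 := by exact_mod_cast hxu
    have hdegu : 0 < (G.neighborFinset u).card := by rw [hcard u]; omega
    obtain ⟨v, hv⟩ := Finset.card_pos.mp hdegu
    have hadj : G.Adj u v := (SimpleGraph.mem_neighborFinset G u v).mp hv
    set e1 : G.Dart := SimpleGraph.Dart.mk (u, v) hadj with he1
    have h1 := hrel e1
    have h2 := hrel e1.symm
    simp only [he1, SimpleGraph.Dart.symm_mk, Prod.swap_prod_mk] at h1 h2
    have hlam2 : lam ^ 2 = 1 := by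
      have hx2 : (x u : ℂ) * (lam ^ 2 - 1) = 0 := by
        linear_combination (-1 : ℂ) * h2 - lam * h1
      rcases mul_eq_zero.mp hx2 with h | h
      · exact absurd h hxuC
      · exact sub_eq_zero.mp h
    have hlam1 : lam = 1 ∨ lam = -1 := by
      have hfac : (lam - 1) * (lam + 1) = 0 := by linear_combination hlam2
      rcases mul_eq_zero.mp hfac with h | h
      · left; exact sub_eq_zero.mp h
      · right; linear_combination h
    obtain ⟨z, e₀, hz0, hzsymm, hzflow⟩ := aux_exists_flow G hconn k hreg hk
    rcases hlam1 with hl | hl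
    · -- lam = 1 : the cycle flow is an eigenvector
      subst hl
      apply aux_mem_spectrum_of_mulVec _ _ z (fun h => hz0 (congrFun h e₀))
      funext e
      rw [aux_mulVec_posSupport G k hreg hk, hzflow e.toProd.1, hzsymm e]
      simp
    · -- lam = -1 : the signed cycle flow is an eigenvector
      subst hl
      -- real alternation
      have haltR : ∀ {p q : V}, G.Adj p q → x q = - x p := by
        intro p q hpq
        have := hrel (SimpleGraph.Dart.mk (p, q) hpq)
        simp only at this
        have : (x q : ℂ) = -(x p : ℂ) := by rw [this]; ring
        exact_mod_cast this
      -- |x| is constant along walks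
      have hwalk : ∀ (p q : V) (w : G.Walk p q), |x q| = |x p| := by
        intro p q w
        induction w with
        | nil => rfl
        | cons h w ih => rw [ih, haltR h, abs_neg]
      have hx_ne : ∀ p : V, x p ≠ 0 := by
        intro p
        have hr := (hconn.preconnected u p).some
        have := hwalk u p hr
        intro h0
        rw [h0, abs_zero] at this
        exact hxu (abs_eq_zero.mp this.symm)
      set w : G.Dart → ℂ := fun f => (x f.toProd.1 : ℂ) * z f with hw
      have hwne : w ≠ 0 := by
        intro h
        have := congrFun h e₀
        simp only [hw, Pi.zero_apply, mul_eq_zero] at this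
        rcases this with h' | h'
        · exact hx_ne e₀.toProd.1 (by exact_mod_cast h')
        · exact hz0 h'
      apply aux_mem_spectrum_of_mulVec _ _ w hwne
      funext e
      rw [aux_mulVec_posSupport G k hreg hk]
      have hT : ∑ f : G.Dart, (if f.toProd.2 = e.toProd.1 then w f else 0) = 0 := by
        have hpt : ∀ f : G.Dart, (if f.toProd.2 = e.toProd.1 then w f else 0)
            = (-(x e.toProd.1 : ℂ)) * (if f.toProd.2 = e.toProd.1 then z f else 0) := by
          intro f
          by_cases h : f.toProd.2 = e.toProd.1
          · have hx1 : (x f.toProd.1 : ℂ) = -(x e.toProd.1 : ℂ) := by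
              have h2 := haltR f.adj
              rw [← h]
              push_cast [h2]
              ring
            simp only [h, if_true, hw, hx1]
            try ring
          · simp [h]
        simp_rw [hpt, ← Finset.mul_sum, hzflow e.toProd.1, mul_zero]
      rw [hT]
      have hsymm2 : w e.symm = w e := by
        simp only [hw, SimpleGraph.Dart.symm_toProd, Prod.fst_swap, hzsymm e]
        have : (x e.toProd.2 : ℂ) = -(x e.toProd.1 : ℂ) := by
          have := haltR e.adj; push_cast [this]; ring
        rw [this]; ring
      rw [hsymm2]
      simp only [Pi.smul_apply, smul_eq_mul]
      ring
  · -- main case : y = x(t·) - lam x(o·) is a nonzero eigenvector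
    apply aux_mem_spectrum_of_mulVec _ _ _ hy
    funext e
    rw [aux_mulVec_posSupport G k hreg hk]
    have hpt : ∀ f : G.Dart,
        (if f.toProd.2 = e.toProd.1 then ((x f.toProd.2 : ℂ) - lam * x f.toProd.1) else 0)
        = (if f.toProd.2 = e.toProd.1 then ((x e.toProd.1 : ℂ)) else 0)
          - lam * (if f.toProd.2 = e.toProd.1 then (x f.toProd.1 : ℂ) else 0) := by
      intro f
      by_cases h : f.toProd.2 = e.toProd.1 <;> simp [h]
    have hsum1 : ∑ f : G.Dart, (if f.toProd.2 = e.toProd.1 then ((x e.toProd.1 : ℂ)) else 0)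
        = (k : ℂ) * x e.toProd.1 := by
      have hconst := aux_sum_darts_to G (fun _ : V => (x e.toProd.1 : ℂ)) e.toProd.1
      rw [hconst, Finset.sum_const, hcard e.toProd.1]
      simp [mul_comm]
    have hsum2 : ∑ f : G.Dart, (if f.toProd.2 = e.toProd.1 then ((x f.toProd.1 : ℂ)) else 0)
        = (a : ℂ) * x e.toProd.1 := by
      rw [aux_sum_darts_to G (fun v => (x v : ℂ)) e.toProd.1]
      exact hxv e.toProd.1
    simp only [hpt]
    rw [Finset.sum_sub_distrib, ← Finset.mul_sum, hsum1, hsum2]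
    simp only [Pi.smul_apply, smul_eq_mul, SimpleGraph.Dart.symm_toProd,
      Prod.fst_swap, Prod.snd_swap]
    linear_combination (x e.toProd.1 : ℂ) * hlam
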